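/- arXiv:1906.03101 — 5 statements merged into one kernel-verified Lean document; each statement's English description precedes it below -/
import Mathlib

section
/- If every path in P is edge simple and P is arc closed, then every path in P↓↑ is edge simple. -/
/-- The set of switch rules induced by a set of paths:
`(a,b,c) ∈ Rules P` iff some path of `P` contains the consecutive triple `a,b,c`. -/
def Rules {V : Type*} (P : Set (List V)) : Set (V × V × V) :=
  {r | ∃ α β : List V, α ++ [r.1, r.2.1, r.2.2] ++ β ∈ P}

/-- `P↓↑`: the set of paths (with at least 3 nodes) all of whose consecutive
triples are rules of `P`, and whose first and last arcs occur as the first/last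
arcs of some paths of `P`. -/
def Closure {V : Type*} (P : Set (List V)) : Set (List V) :=
  {l | 3 ≤ l.length ∧
    (∀ (α β : List V) (a b c : V), l = α ++ [a, b, c] ++ β → (a, b, c) ∈ Rules P) ∧
    (∃ x y : V, (∃ r : List V, l = x :: y :: r) ∧ ∃ p ∈ P, ∃ r : List V, p = x :: y :: r) ∧
    (∃ x y : V, (∃ r : List V, l = r ++ [x, y]) ∧ ∃ p ∈ P, ∃ r : List V, p = r ++ [x, y])}

/-- A set of paths is arc closed if it satisfies the exchange property for common arcs. -/
def ArcClosed {V : Type*} (P : Set (List V)) : Prop :=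
  ∀ (α α' β β' : List V) (x y : V),
    α ++ [x, y] ++ β ∈ P → α' ++ [x, y] ++ β' ∈ P → α ++ [x, y] ++ β' ∈ P

/-- A path is edge simple if its consecutive arcs are pairwise distinct. -/
def EdgeSimple {V : Type*} (l : List V) : Prop := (l.zip l.tail).Nodup

/-- Any list of length ≥ 3 all of whose triples are rules of `P` is a
consecutive sublist of some path of `P`. -/
lemma infix_of_rules {V : Type*} (P : Set (List V)) (hclosed : ArcClosed P) :
    ∀ (l : List V), 3 ≤ l.length →
      (∀ (α β : List V) (a b c : V), l = α ++ [a, b, c] ++ β → (a, b, c) ∈ Rules P) →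
      ∃ α β, α ++ l ++ β ∈ P := by
  intro l
  induction l with
  | nil => simp
  | cons a t ih =>
    intro hlen htr
    match t, hlen with
    | b :: c :: rest, _ =>
      rcases rest with _ | ⟨d, rest'⟩
      · -- l = [a,b,c]
        obtain ⟨α, β, h⟩ := htr [] [] a b c (by simp)
        exact ⟨α, β, h⟩
      · -- l = a :: b :: c :: d :: rest'
        obtain ⟨α, β, h1⟩ := ih (by simp) (by
          intro α β a' b' c' heq
          exact htr (a :: α) β a' b' c' (by simp [heq]))
        obtain ⟨α', β', h2⟩ := htr [] (d :: rest') a b c (by simp)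
        have h1' : α ++ [b, c] ++ ((d :: rest') ++ β) ∈ P := by
          simpa using h1
        have h2' : (α' ++ [a]) ++ [b, c] ++ β' ∈ P := by
          simpa using h2
        have := hclosed (α' ++ [a]) α β' ((d :: rest') ++ β) b c h2' h1'
        refine ⟨α', β, ?_⟩
        simpa using this

theorem stmt5 {V : Type*} (P : Set (List V))
    (hsimple : ∀ p ∈ P, EdgeSimple p) (hclosed : ArcClosed P) :
    ∀ q ∈ Closure P, EdgeSimple q := by
  intro q hq
  obtain ⟨hlen, htr, ⟨x, y, ⟨r, hq1⟩, p, hp, r2, hp1⟩,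
         ⟨x', y', ⟨r', hq2⟩, p', hp', r2', hp2⟩⟩ := hq
  obtain ⟨α, β, hmem⟩ := infix_of_rules P hclosed q hlen htr
  -- first arc: get q ++ β ∈ P
  have hmem1 : α ++ [x, y] ++ (r ++ β) ∈ P := by
    rw [hq1] at hmem; simpa using hmem
  have hp1' : [] ++ [x, y] ++ r2 ∈ P := by rw [hp1] at hp; simpa using hp
  have hstep2 : q ++ β ∈ P := by
    have := hclosed [] α r2 (r ++ β) x y hp1' hmem1
    rw [hq1]; simpa using this
  -- last arc: get q ∈ P
  have hstep2' : r' ++ [x', y'] ++ β ∈ P := by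
    rw [hq2] at hstep2; simpa using hstep2
  have hp2' : r2' ++ [x', y'] ++ [] ∈ P := by rw [hp2] at hp'; simpa using hp'
  have hqP : q ∈ P := by
    have := hclosed r' r2' β [] x' y' hstep2' hp2'
    rw [hq2]; simpa using this
  exact hsimple q hqP
end

section
/- The arc closure operator is idempotent on sets of paths of length ≥ 2: (P↓↑)↓↑ = P↓↑. -/
theorem stmt10 {V : Type*} (P : Set (List V)) (hlen : ∀ p ∈ P, 3 ≤ p.length) :
    Closure (Closure P) = Closure P := by
  ext l
  constructor
  · rintro ⟨h3, htr, ⟨x, y, ⟨r, hr⟩, p, hp, r', hr'⟩, ⟨u, v, ⟨s, hs⟩, q, hq, s', hs'⟩⟩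
    refine ⟨h3, ?_, ⟨x, y, ⟨r, hr⟩, ?_⟩, ⟨u, v, ⟨s, hs⟩, ?_⟩⟩
    · intro α β a b c hl
      obtain ⟨α', β', hmem⟩ := htr α β a b c hl
      exact hmem.2.1 α' β' a b c rfl
    · obtain ⟨_, _, ⟨x', y', ⟨r2, hr2⟩, hw⟩, _⟩ := hp
      rw [hr'] at hr2
      obtain ⟨hx, hy, _⟩ := by simpa using hr2
      rwa [hx, hy]
    · obtain ⟨_, _, _, ⟨u', v', ⟨s2, hs2⟩, hw⟩⟩ := hq
      rw [hs'] at hs2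
      have := (List.append_inj' hs2 rfl).2
      simp only [List.cons.injEq] at this
      obtain ⟨hu, hv, -⟩ := this
      rwa [hu, hv]
  · rintro ⟨h3, htr, ⟨x, y, ⟨r, hr⟩, hfst⟩, ⟨u, v, ⟨s, hs⟩, hlst⟩⟩
    refine ⟨h3, ?_, ⟨x, y, ⟨r, hr⟩, l, ?_, r, hr⟩, ⟨u, v, ⟨s, hs⟩, l, ?_, s, hs⟩⟩
    · intro α β a b c hl
      exact ⟨α, β, hl ▸ ⟨h3, htr, ⟨x, y, ⟨r, hr⟩, hfst⟩, ⟨u, v, ⟨s, hs⟩, hlst⟩⟩⟩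
    · exact ⟨h3, htr, ⟨x, y, ⟨r, hr⟩, hfst⟩, ⟨u, v, ⟨s, hs⟩, hlst⟩⟩
    · exact ⟨h3, htr, ⟨x, y, ⟨r, hr⟩, hfst⟩, ⟨u, v, ⟨s, hs⟩, hlst⟩⟩
end

section
/- The rules induced by the closure coincide with the original rules: (P↓↑)↓ = P↓, for any set P of paths each with at least 3 nodes. -/
theorem stmt11 {V : Type*} (P : Set (List V)) (hlen : ∀ p ∈ P, 3 ≤ p.length) :
    Rules (Closure P) = Rules P := by
  have ex2 : ∀ l : List V, 2 ≤ l.length → ∃ x y r, l = x :: y :: r := by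
    intro l hl
    match l with
    | x :: y :: r => exact ⟨x, y, r, rfl⟩
  have ex2' : ∀ l : List V, 2 ≤ l.length → ∃ x y r, l = r ++ [x, y] := by
    intro l hl
    obtain ⟨x, y, r, hr⟩ := ex2 l.reverse (by simpa using hl)
    refine ⟨y, x, r.reverse, ?_⟩
    have := congrArg List.reverse hr
    simpa using this
  ext r
  constructor
  · rintro ⟨α, β, h⟩
    exact h.2.1 α β r.1 r.2.1 r.2.2 rfl
  · rintro ⟨α, β, hp⟩
    refine ⟨α, β, ?_, ?_, ?_, ?_⟩
    · simp; omega
    · intro α' β' a b c h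
      exact ⟨α', β', h ▸ hp⟩
    · obtain ⟨x, y, t, ht⟩ := ex2 (α ++ [r.1, r.2.1, r.2.2] ++ β) (by simp; omega)
      exact ⟨x, y, ⟨t, ht⟩, _, hp, t, ht⟩
    · obtain ⟨x, y, t, ht⟩ := ex2' (α ++ [r.1, r.2.1, r.2.2] ++ β) (by simp; omega)
      exact ⟨x, y, ⟨t, ht⟩, _, hp, t, ht⟩
end

section
/- Let P = {α, β} where α = [h₀,s₁,s₂,s₃,s₄,s₅,s₆,h₁] and β = [h₀,s₁,s₄,s₅,s₂,s₃,s₆,h₁] over distinct nodes h₀,h₁,s₁,…,s₆. Then the arc closure P↓↑ contains the path γ = [h₀,s₁,s₂,s₃,s₄,s₅,s₂,s₃,s₄,s₅,s₆,h₁], which is not edge simple; in particular P is not arc closed. -/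
theorem stmt13 {V : Type*} (h0 h1 s1 s2 s3 s4 s5 s6 : V)
    (hdist : List.Nodup [h0, h1, s1, s2, s3, s4, s5, s6]) :
    let P : Set (List V) :=
      {[h0, s1, s2, s3, s4, s5, s6, h1], [h0, s1, s4, s5, s2, s3, s6, h1]}
    let γ : List V := [h0, s1, s2, s3, s4, s5, s2, s3, s4, s5, s6, h1]
    γ ∈ Closure P ∧ ¬ EdgeSimple γ ∧ ¬ ArcClosed P := by
  intro P γ
  have hp1 : [h0, s1, s2, s3, s4, s5, s6, h1] ∈ P := Or.inl rfl
  have hp2 : [h0, s1, s4, s5, s2, s3, s6, h1] ∈ P := Or.inr rfl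
  simp only [List.nodup_cons, List.mem_cons, List.mem_singleton, List.not_mem_nil] at hdist
  refine ⟨⟨by simp [γ], ?_, ⟨h0, s1, ⟨_, rfl⟩, _, hp1, _, rfl⟩,
      ⟨s6, h1, ⟨[h0,s1,s2,s3,s4,s5,s2,s3,s4,s5], rfl⟩, _, hp1, [h0,s1,s2,s3,s4,s5], rfl⟩⟩, ?_, ?_⟩
  · intro α β a b c h
    simp only [γ] at h
    match α, h with
    | [], h =>
      simp only [List.nil_append, List.cons_append, List.cons.injEq] at h
      obtain ⟨rfl, rfl, rfl, -⟩ := h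
      exact ⟨[], [s3,s4,s5,s6,h1], hp1⟩
    | [_], h =>
      simp only [List.nil_append, List.cons_append, List.cons.injEq] at h
      obtain ⟨-, rfl, rfl, rfl, -⟩ := h
      exact ⟨[h0], [s4,s5,s6,h1], hp1⟩
    | [_,_], h =>
      simp only [List.nil_append, List.cons_append, List.cons.injEq] at h
      obtain ⟨-, -, rfl, rfl, rfl, -⟩ := h
      exact ⟨[h0,s1], [s5,s6,h1], hp1⟩
    | [_,_,_], h =>
      simp only [List.nil_append, List.cons_append, List.cons.injEq] at h
      obtain ⟨-, -, -, rfl, rfl, rfl, -⟩ := h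
      exact ⟨[h0,s1,s2], [s6,h1], hp1⟩
    | [_,_,_,_], h =>
      simp only [List.nil_append, List.cons_append, List.cons.injEq] at h
      obtain ⟨-, -, -, -, rfl, rfl, rfl, -⟩ := h
      exact ⟨[h0,s1], [s3,s6,h1], hp2⟩
    | [_,_,_,_,_], h =>
      simp only [List.nil_append, List.cons_append, List.cons.injEq] at h
      obtain ⟨-, -, -, -, -, rfl, rfl, rfl, -⟩ := h
      exact ⟨[h0,s1,s4], [s6,h1], hp2⟩
    | [_,_,_,_,_,_], h =>
      simp only [List.nil_append, List.cons_append, List.cons.injEq] at h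
      obtain ⟨-, -, -, -, -, -, rfl, rfl, rfl, -⟩ := h
      exact ⟨[h0,s1], [s5,s6,h1], hp1⟩
    | [_,_,_,_,_,_,_], h =>
      simp only [List.nil_append, List.cons_append, List.cons.injEq] at h
      obtain ⟨-, -, -, -, -, -, -, rfl, rfl, rfl, -⟩ := h
      exact ⟨[h0,s1,s2], [s6,h1], hp1⟩
    | [_,_,_,_,_,_,_,_], h =>
      simp only [List.nil_append, List.cons_append, List.cons.injEq] at h
      obtain ⟨-, -, -, -, -, -, -, -, rfl, rfl, rfl, -⟩ := h
      exact ⟨[h0,s1,s2,s3], [h1], hp1⟩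
    | [_,_,_,_,_,_,_,_,_], h =>
      simp only [List.nil_append, List.cons_append, List.cons.injEq] at h
      obtain ⟨-, -, -, -, -, -, -, -, -, rfl, rfl, rfl, -⟩ := h
      exact ⟨[h0,s1,s2,s3,s4], [], hp1⟩
    | _::_::_::_::_::_::_::_::_::_::l, h =>
      have := congrArg List.length h
      simp [List.length_append] at this
      omega
  · intro h
    simp only [γ, EdgeSimple] at h
    simp [List.zip, List.nodup_cons, List.mem_cons, Prod.mk.injEq] at h
  · intro hAC
    have := hAC [h0,s1] [h0,s1,s4,s5] [s4,s5,s6,h1] [s6,h1] s2 s3 hp1 hp2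
    simp only [P, Set.mem_insert_iff, Set.mem_singleton_iff, List.cons_append,
      List.nil_append, List.cons.injEq] at this
    rcases this with ⟨-,-,-,-,h'⟩ | ⟨-,-,-,h'⟩ <;> simp at h'
end

section
/- With P = {[h₀,s₁,s₂,s₃,s₄,s₅,s₆,h₁], [h₀,s₁,s₄,s₅,s₂,s₃,s₆,h₁]} over 8 distinct nodes, the arc closure P↓↑ is infinite: for every natural number k it contains a path of length greater than k (obtained by repeating the cycle s₂·s₃·s₄·s₅). -/
section Aux

variable {V : Type*}

lemma tc (Q : V × V × V → Prop) (x y z : V) (l : List V)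
    (hq : Q (x, y, z))
    (ih : ∀ α β a b c, y :: z :: l = α ++ [a, b, c] ++ β → Q (a, b, c)) :
    ∀ α β a b c, x :: y :: z :: l = α ++ [a, b, c] ++ β → Q (a, b, c) := by
  intro α β a b c h
  cases α with
  | nil =>
    simp only [List.nil_append, List.cons_append, List.cons.injEq] at h
    obtain ⟨h1, h2, h3, _⟩ := h
    subst h1; subst h2; subst h3; exact hq
  | cons w α' =>
    simp only [List.cons_append, List.cons.injEq] at h
    exact ih α' β a b c h.2

lemma tc2 (Q : V × V × V → Prop) (u v : V) :
    ∀ α β a b c, [u, v] = α ++ [a, b, c] ++ β → Q (a, b, c) := by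
  intro α β a b c h
  have := congrArg List.length h
  simp at this
  omega

def pAux (s2 s3 s4 s5 s6 h1 : V) : ℕ → List V
  | 0 => [s6, h1]
  | n + 1 => s4 :: s5 :: s2 :: s3 :: pAux s2 s3 s4 s5 s6 h1 n

lemma pAux_length (s2 s3 s4 s5 s6 h1 : V) (n : ℕ) :
    (pAux s2 s3 s4 s5 s6 h1 n).length = 2 + 4 * n := by
  induction n with
  | zero => rfl
  | succ n ih => simp [pAux, ih]; omega

lemma pAux_last (s2 s3 s4 s5 s6 h1 : V) (n : ℕ) :
    ∃ r : List V, pAux s2 s3 s4 s5 s6 h1 n = r ++ [s6, h1] := by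
  induction n with
  | zero => exact ⟨[], rfl⟩
  | succ n ih =>
    obtain ⟨r, hr⟩ := ih
    exact ⟨s4 :: s5 :: s2 :: s3 :: r, by simp [pAux, hr]⟩

end Aux

section Main

variable {V : Type*} (h0 h1 s1 s2 s3 s4 s5 s6 : V)

def P0 : Set (List V) :=
  {[h0, s1, s2, s3, s4, s5, s6, h1], [h0, s1, s4, s5, s2, s3, s6, h1]}

lemma rules_mem (a b c : V) (α β : List V)
    (h : α ++ [a, b, c] ++ β ∈ P0 h0 h1 s1 s2 s3 s4 s5 s6) :
    (a, b, c) ∈ Rules (P0 h0 h1 s1 s2 s3 s4 s5 s6) := ⟨α, β, h⟩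

lemma triples (n : ℕ) :
    ∀ α β a b c, s2 :: s3 :: pAux s2 s3 s4 s5 s6 h1 n = α ++ [a, b, c] ++ β →
      (a, b, c) ∈ Rules (P0 h0 h1 s1 s2 s3 s4 s5 s6) := by
  set P := P0 h0 h1 s1 s2 s3 s4 s5 s6 with hP
  have m1 : [h0, s1, s2, s3, s4, s5, s6, h1] ∈ P := Or.inl rfl
  have m2 : [h0, s1, s4, s5, s2, s3, s6, h1] ∈ P := Or.inr rfl
  have r236 : (s2, s3, s6) ∈ Rules P := by
    refine ⟨[h0, s1, s4, s5], [h1], ?_⟩; simpa using m2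
  have r36h : (s3, s6, h1) ∈ Rules P := by
    refine ⟨[h0, s1, s4, s5, s2], [], ?_⟩; simpa using m2
  have r234 : (s2, s3, s4) ∈ Rules P := by
    refine ⟨[h0, s1], [s5, s6, h1], ?_⟩; simpa using m1
  have r345 : (s3, s4, s5) ∈ Rules P := by
    refine ⟨[h0, s1, s2], [s6, h1], ?_⟩; simpa using m1
  have r452 : (s4, s5, s2) ∈ Rules P := by
    refine ⟨[h0, s1], [s3, s6, h1], ?_⟩; simpa using m2
  have r523 : (s5, s2, s3) ∈ Rules P := by
    refine ⟨[h0, s1, s4], [s6, h1], ?_⟩; simpa using m2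
  induction n with
  | zero =>
    show ∀ α β a b c, s2 :: s3 :: s6 :: [h1] = α ++ [a, b, c] ++ β → (a, b, c) ∈ Rules P
    apply tc (fun r => r ∈ Rules P) s2 s3 s6 [h1] r236
    apply tc (fun r => r ∈ Rules P) s3 s6 h1 [] r36h
    exact tc2 _ _ _
  | succ n ih =>
    show ∀ α β a b c, s2 :: s3 :: s4 :: s5 :: s2 :: s3 :: pAux s2 s3 s4 s5 s6 h1 n
        = α ++ [a, b, c] ++ β → (a, b, c) ∈ Rules P
    apply tc (fun r => r ∈ Rules P) s2 s3 s4 _ r234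
    apply tc (fun r => r ∈ Rules P) s3 s4 s5 _ r345
    apply tc (fun r => r ∈ Rules P) s4 s5 s2 _ r452
    apply tc (fun r => r ∈ Rules P) s5 s2 s3 _ r523
    exact ih

lemma full_mem (n : ℕ) :
    h0 :: s1 :: s2 :: s3 :: pAux s2 s3 s4 s5 s6 h1 n
      ∈ Closure (P0 h0 h1 s1 s2 s3 s4 s5 s6) := by
  have m1 : [h0, s1, s2, s3, s4, s5, s6, h1] ∈ P0 h0 h1 s1 s2 s3 s4 s5 s6 := Or.inl rfl
  have m2 : [h0, s1, s4, s5, s2, s3, s6, h1] ∈ P0 h0 h1 s1 s2 s3 s4 s5 s6 := Or.inr rfl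
  refine ⟨?_, ?_, ?_, ?_⟩
  · simp [pAux_length]
  · have rh12 : (h0, s1, s2) ∈ Rules (P0 h0 h1 s1 s2 s3 s4 s5 s6) := by
      refine ⟨[], [s3, s4, s5, s6, h1], ?_⟩; simpa using m1
    have r123 : (s1, s2, s3) ∈ Rules (P0 h0 h1 s1 s2 s3 s4 s5 s6) := by
      refine ⟨[h0], [s4, s5, s6, h1], ?_⟩; simpa using m1
    apply tc (fun r => r ∈ Rules (P0 h0 h1 s1 s2 s3 s4 s5 s6)) h0 s1 s2 _ rh12
    apply tc (fun r => r ∈ Rules (P0 h0 h1 s1 s2 s3 s4 s5 s6)) s1 s2 s3 _ r123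
    exact triples h0 h1 s1 s2 s3 s4 s5 s6 n
  · exact ⟨h0, s1, ⟨_, rfl⟩, _, m1, _, rfl⟩
  · obtain ⟨r, hr⟩ := pAux_last s2 s3 s4 s5 s6 h1 n
    exact ⟨s6, h1, ⟨h0 :: s1 :: s2 :: s3 :: r, by simp [hr]⟩, _, m1, [h0, s1, s2, s3, s4, s5], rfl⟩

end Main

theorem stmt14 {V : Type*} (h0 h1 s1 s2 s3 s4 s5 s6 : V)
    (hdist : List.Nodup [h0, h1, s1, s2, s3, s4, s5, s6]) :
    let P : Set (List V) :=
      {[h0, s1, s2, s3, s4, s5, s6, h1], [h0, s1, s4, s5, s2, s3, s6, h1]}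
    (Closure P).Infinite ∧ ∀ k : ℕ, ∃ p ∈ Closure P, k < p.length - 1 := by
  intro P
  have hPP : P = P0 h0 h1 s1 s2 s3 s4 s5 s6 := rfl
  have hmem : ∀ n : ℕ, h0 :: s1 :: s2 :: s3 :: pAux s2 s3 s4 s5 s6 h1 n ∈ Closure P := by
    rw [hPP]; exact full_mem h0 h1 s1 s2 s3 s4 s5 s6
  have hlen : ∀ n : ℕ, (h0 :: s1 :: s2 :: s3 :: pAux s2 s3 s4 s5 s6 h1 n).length = 6 + 4 * n := by
    intro n; simp [pAux_length]; omega
  constructor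
  · refine Set.infinite_of_injective_forall_mem
      (f := fun n => h0 :: s1 :: s2 :: s3 :: pAux s2 s3 s4 s5 s6 h1 n) ?_ hmem
    intro a b hab
    have := congrArg List.length hab
    rw [hlen, hlen] at this
    omega
  · intro k
    exact ⟨_, hmem k, by rw [hlen]; omega⟩
end
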